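/- Let V, V' ⊆ {1,…,N} be nonempty with V ∩ V' = ∅, let a ∈ 𝔸_V, a' ∈ 𝔸_{V'}, and let c ∈ ℝ^N have strictly positive entries. Then N^eff(a+a',c) ≤ N^eff(a,c) + N^eff(a',c), with equality if and only if (∑_{j∈V} c^j)/N^eff(a,c) = (∑_{j∈V'} c^j)/N^eff(a',c). -/

import Mathlib

open Finset

/-- Membership in `𝔸_V`: nonnegative `N × N` matrices supported on `V × V` whose
rows and columns indexed by `V` sum to one. -/
def memA {N : ℕ} (V : Finset (Fin N)) (a : Matrix (Fin N) (Fin N) ℝ) : Prop :=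
  (∀ i j, 0 ≤ a i j) ∧
  (∀ i j, (i ∉ V ∨ j ∉ V) → a i j = 0) ∧
  (∀ i ∈ V, ∑ j, a i j = 1) ∧
  (∀ j ∈ V, ∑ i, a i j = 1)

/-- The effective sample size `N^eff(a, c)`. -/
noncomputable def Neff {N : ℕ} (a : Matrix (Fin N) (Fin N) ℝ) (c : Fin N → ℝ) : ℝ :=
  (∑ i, ∑ j, a i j * c j) ^ 2 / (∑ i, (∑ j, a i j * c j) ^ 2)

lemma aux_alg (S S' Q Q' : ℝ) (hS : 0 < S) (hS' : 0 < S') (hQ : 0 < Q) (hQ' : 0 < Q') :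
    (S+S')^2/(Q+Q') ≤ S^2/Q + S'^2/Q' ∧
    ((S+S')^2/(Q+Q') = S^2/Q + S'^2/Q' ↔ S/(S^2/Q) = S'/(S'^2/Q')) := by
  have hQQ' : 0 < Q + Q' := by linarith
  have key : S^2/Q + S'^2/Q' - (S+S')^2/(Q+Q') = (S*Q'-S'*Q)^2/(Q*Q'*(Q+Q')) := by
    field_simp
    ring
  have hdenom : (0:ℝ) < Q*Q'*(Q+Q') := by positivity
  have hnn : 0 ≤ (S*Q'-S'*Q)^2/(Q*Q'*(Q+Q')) := by positivity
  refine ⟨by linarith, ?_⟩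
  have e1 : S/(S^2/Q) = Q/S := by field_simp
  have e2 : S'/(S'^2/Q') = Q'/S' := by field_simp
  rw [e1, e2, div_eq_div_iff hS.ne' hS'.ne']
  constructor
  · intro h
    have h0 : (S*Q'-S'*Q)^2/(Q*Q'*(Q+Q')) = 0 := by linarith
    have h1 : (S*Q'-S'*Q)^2 = 0 := by
      by_contra hne
      exact (div_ne_zero hne hdenom.ne') h0
    have h2 : S*Q' - S'*Q = 0 := pow_eq_zero_iff (n := 2) (by norm_num) |>.mp h1
    linarith
  · intro h
    have h1 : S*Q' - S'*Q = 0 := by linarith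
    have : (S*Q'-S'*Q)^2/(Q*Q'*(Q+Q')) = 0 := by rw [h1]; simp
    linarith

lemma row_sum_eq {N : ℕ} (V : Finset (Fin N)) (a : Matrix (Fin N) (Fin N) ℝ)
    (ha : memA V a) (c : Fin N → ℝ) :
    ∑ i, ∑ j, a i j * c j = ∑ j ∈ V, c j := by
  rw [Finset.sum_comm]
  have h1 : ∀ j : Fin N, ∑ i, a i j * c j = if j ∈ V then c j else 0 := by
    intro j
    rw [← Finset.sum_mul]
    by_cases hj : j ∈ V
    · rw [ha.2.2.2 j hj, if_pos hj, one_mul]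
    · rw [if_neg hj]
      have : ∑ i, a i j = 0 := Finset.sum_eq_zero fun i _ => ha.2.1 i j (Or.inr hj)
      rw [this, zero_mul]
  simp_rw [h1]
  simp

lemma row_zero {N : ℕ} (V : Finset (Fin N)) (a : Matrix (Fin N) (Fin N) ℝ)
    (ha : memA V a) (c : Fin N → ℝ) {i : Fin N} (hi : i ∉ V) :
    ∑ j, a i j * c j = 0 :=
  Finset.sum_eq_zero fun j _ => by rw [ha.2.1 i j (Or.inl hi), zero_mul]

theorem stmt_4 {N : ℕ} (hN : 1 ≤ N) (V V' : Finset (Fin N))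
    (hV : V.Nonempty) (hV' : V'.Nonempty) (hdisj : Disjoint V V')
    (a a' : Matrix (Fin N) (Fin N) ℝ) (ha : memA V a) (ha' : memA V' a')
    (c : Fin N → ℝ) (hc : ∀ j, 0 < c j) :
    Neff (a + a') c ≤ Neff a c + Neff a' c ∧
    (Neff (a + a') c = Neff a c + Neff a' c ↔
      (∑ j ∈ V, c j) / Neff a c = (∑ j ∈ V', c j) / Neff a' c) := by
  set r : Fin N → ℝ := fun i => ∑ j, a i j * c j with hr
  set r' : Fin N → ℝ := fun i => ∑ j, a' i j * c j with hr'
  have hS : ∑ i, r i = ∑ j ∈ V, c j := row_sum_eq V a ha c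
  have hS' : ∑ i, r' i = ∑ j ∈ V', c j := row_sum_eq V' a' ha' c
  have hSpos : 0 < ∑ j ∈ V, c j := Finset.sum_pos (fun j _ => hc j) hV
  have hS'pos : 0 < ∑ j ∈ V', c j := Finset.sum_pos (fun j _ => hc j) hV'
  have hQnn : ∀ f : Fin N → ℝ, (0:ℝ) ≤ ∑ i, (f i)^2 :=
    fun f => Finset.sum_nonneg fun i _ => sq_nonneg _
  have hQpos : 0 < ∑ i, (r i)^2 := by
    rcases (hQnn r).lt_or_eq with h | h
    · exact h
    · exfalso
      have hz : ∀ i ∈ Finset.univ, (r i)^2 = 0 :=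
        (Finset.sum_eq_zero_iff_of_nonneg (fun i _ => sq_nonneg _)).mp h.symm
      have : ∑ i, r i = 0 := Finset.sum_eq_zero fun i hi =>
        pow_eq_zero_iff (n := 2) (by norm_num) |>.mp (hz i hi)
      rw [hS] at this
      linarith
  have hQ'pos : 0 < ∑ i, (r' i)^2 := by
    rcases (hQnn r').lt_or_eq with h | h
    · exact h
    · exfalso
      have hz : ∀ i ∈ Finset.univ, (r' i)^2 = 0 :=
        (Finset.sum_eq_zero_iff_of_nonneg (fun i _ => sq_nonneg _)).mp h.symm
      have : ∑ i, r' i = 0 := Finset.sum_eq_zero fun i hi =>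
        pow_eq_zero_iff (n := 2) (by norm_num) |>.mp (hz i hi)
      rw [hS'] at this
      linarith
  have hcross : ∀ i, r i * r' i = 0 := by
    intro i
    by_cases hi : i ∈ V
    · have hi' : i ∉ V' := Finset.disjoint_left.mp hdisj hi
      rw [show r' i = 0 from row_zero V' a' ha' c hi', mul_zero]
    · rw [show r i = 0 from row_zero V a ha c hi, zero_mul]
  have hsum_add : ∀ i, ∑ j, (a + a') i j * c j = r i + r' i := by
    intro i
    simp [Matrix.add_apply, add_mul, Finset.sum_add_distrib, hr, hr']
  have hNadd : Neff (a + a') c =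
      ((∑ i, r i) + (∑ i, r' i))^2 / ((∑ i, (r i)^2) + (∑ i, (r' i)^2)) := by
    unfold Neff
    simp_rw [hsum_add]
    rw [Finset.sum_add_distrib]
    congr 1
    rw [← Finset.sum_add_distrib]
    apply Finset.sum_congr rfl
    intro i _
    have := hcross i
    ring_nf
    nlinarith [hcross i]
  have hNa : Neff a c = (∑ i, r i)^2 / (∑ i, (r i)^2) := rfl
  have hNa' : Neff a' c = (∑ i, r' i)^2 / (∑ i, (r' i)^2) := rfl
  obtain ⟨h1, h2⟩ := aux_alg (∑ i, r i) (∑ i, r' i) (∑ i, (r i)^2) (∑ i, (r' i)^2)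
    (hS ▸ hSpos) (hS' ▸ hS'pos) hQpos hQ'pos
  rw [hNadd, hNa, hNa', ← hS, ← hS']
  exact ⟨h1, h2⟩
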